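/- Let A, B be bounded self-adjoint operators on a complex Hilbert space. Then AB²A = BA²B if and only if AB² = B²A and BA² = A²B. -/

import Mathlib

open NormedSpace

section FP

variable {H : Type*} [NormedAddCommGroup H] [InnerProductSpace ℂ H] [CompleteSpace H]

local notation "𝔸" => H →L[ℂ] H

noncomputable local instance : NormedAlgebra ℚ 𝔸 := NormedAlgebra.restrictScalars ℚ ℂ 𝔸

lemma exp_mul_exp_neg_self' (a : 𝔸) : exp a * exp (-a) = 1 := by
  rw [← exp_add_of_commute (Commute.neg_right (Commute.refl _)), add_neg_cancel, exp_zero]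

lemma expIntertwine {a b X : 𝔸} (h : a * X = X * b) (z : ℂ) :
    exp (z • a) * X = X * exp (z • b) := by
  have key : ∀ w : ℂ, exp (w • (-a)) * X * exp (w • b) = X := by
    have hd : ∀ w : ℂ, HasDerivAt (fun u : ℂ => exp (u • (-a)) * X * exp (u • b))
        (0 : 𝔸) w := by
      intro w
      have h1 : HasDerivAt (fun u : ℂ => exp (u • (-a)) * X)
          (exp (w • (-a)) * (-a) * X) w :=
        (hasDerivAt_exp_smul_const (-a) w).mul_const X
      have h2 := h1.mul (hasDerivAt_exp_smul_const' b w)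
      refine h2.congr_deriv (Eq.symm ?_)
      calc (0 : 𝔸) = exp (w • (-a)) * (-(a * X) + X * b) * exp (w • b) := by
            rw [h]; simp
        _ = exp (w • (-a)) * (-a) * X * exp (w • b)
            + exp (w • (-a)) * X * (b * exp (w • b)) := by noncomm_ring
    intro w
    have hc := is_const_of_fderiv_eq_zero (𝕜 := ℂ)
      (f := fun u : ℂ => exp (u • (-a)) * X * exp (u • b))
      (fun u => (hd u).differentiableAt)
      (fun u => by rw [(hd u).hasFDerivAt.fderiv]; ext v; simp) w 0
    simpa using hc
  have hk := key z
  calc exp (z • a) * X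
      = exp (z • a) * (exp (z • (-a)) * X * exp (z • b)) := by rw [hk]
    _ = (exp (z • a) * exp (-(z • a))) * (X * exp (z • b)) := by
        rw [smul_neg]; noncomm_ring
    _ = X * exp (z • b) := by rw [exp_mul_exp_neg_self']; simp

lemma norm_exp_skew_le_one {K : 𝔸} (hK : star K = -K) : ‖exp K‖ ≤ 1 := by
  have h1 : star (exp K) * exp K = 1 := by
    rw [star_exp, hK, ← exp_add_of_commute (Commute.neg_left (Commute.refl _)),
      neg_add_cancel, exp_zero]
  have h2 : ‖exp K‖ * ‖exp K‖ = ‖star (exp K) * exp K‖ :=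
    (CStarRing.norm_star_mul_self).symm
  rw [h1] at h2
  have hle : ‖(1 : 𝔸)‖ ≤ 1 := ContinuousLinearMap.norm_id_le
  nlinarith [norm_nonneg (exp K)]

/-- Special case of Fuglede–Putnam: if `M` is normal and `M X = X M*`, then `M* X = X M`. -/
lemma fuglede_special {M X : 𝔸} (hM : M * star M = star M * M)
    (h : M * X = X * star M) : star M * X = X * M := by
  have hcomm : Commute (star M) M := hM.symm
  set F : ℂ → 𝔸 := fun z => exp (z • star M) * X * exp (z • (-M)) with hF
  -- boundedness
  have hbd : ∀ z : ℂ, ‖F z‖ ≤ ‖X‖ := by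
    intro z
    set c : ℂ := starRingEnd ℂ z with hc
    have hX : X = exp (c • (-M)) * X * exp (c • star M) := by
      have hi := expIntertwine h c
      calc X = (exp (c • (-M)) * exp (c • M)) * X := by
            have : exp (c • (-M)) * exp (c • M) = 1 := by
              rw [smul_neg, ← exp_mul_exp_neg_self' (-(c • M))]; simp
            rw [this, one_mul]
        _ = exp (c • (-M)) * (exp (c • M) * X) := by rw [mul_assoc]
        _ = exp (c • (-M)) * (X * exp (c • star M)) := by rw [hi]
        _ = exp (c • (-M)) * X * exp (c • star M) := by rw [mul_assoc]
    have hU : exp (z • star M) * exp (c • (-M)) = exp (z • star M + c • (-M)) := by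
      rw [exp_add_of_commute]
      exact (hcomm.neg_right.smul_left z).smul_right c
    have hV : exp (c • star M) * exp (z • (-M)) = exp (c • star M + z • (-M)) := by
      rw [exp_add_of_commute]
      exact (hcomm.neg_right.smul_left c).smul_right z
    have hUs : star (z • star M + c • (-M)) = -(z • star M + c • (-M)) := by
      simp only [star_add, star_smul, star_star, star_neg, RCLike.star_def, hc, starRingEnd_self_apply]
      module
    have hVs : star (c • star M + z • (-M)) = -(c • star M + z • (-M)) := by
      simp only [star_add, star_smul, star_star, star_neg, RCLike.star_def, hc, starRingEnd_self_apply]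
      module
    have hFz : F z = exp (z • star M + c • (-M)) * X * exp (c • star M + z • (-M)) := by
      rw [hF]
      simp only
      conv_lhs => rw [hX]
      rw [← hU, ← hV]
      noncomm_ring
    rw [hFz]
    calc ‖exp (z • star M + c • (-M)) * X * exp (c • star M + z • (-M))‖
        ≤ ‖exp (z • star M + c • (-M)) * X‖ * ‖exp (c • star M + z • (-M))‖ :=
          norm_mul_le _ _
      _ ≤ ‖exp (z • star M + c • (-M))‖ * ‖X‖ * ‖exp (c • star M + z • (-M))‖ := by
          gcongr; exact norm_mul_le _ _
      _ ≤ ‖X‖ := by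
          have u1 := norm_exp_skew_le_one hUs
          have u2 := norm_exp_skew_le_one hVs
          have n1 := norm_nonneg (exp (z • star M + c • (-M)))
          have n3 := norm_nonneg X
          have s1 := mul_le_of_le_one_right (mul_nonneg n1 n3) u2
          have s2 := mul_le_of_le_one_left n3 u1
          linarith
  -- F is entire
  have hdiff : Differentiable ℂ F := by
    intro z
    exact (((hasDerivAt_exp_smul_const (star M) z).mul_const X).mul
      (hasDerivAt_exp_smul_const (-M) z)).differentiableAt
  -- Liouville: F constant
  have hconst : ∀ z : ℂ, F z = X := by
    intro z
    have := hdiff.apply_eq_apply_of_bounded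
      (isBounded_iff_forall_norm_le.mpr ⟨‖X‖, by rintro y ⟨z, rfl⟩; exact hbd z⟩) z 0
    rw [this]; simp [hF]
  -- turn into intertwining relation
  have hrel : ∀ z : ℂ, exp (z • star M) * X = X * exp (z • M) := by
    intro z
    have hk := hconst z
    calc exp (z • star M) * X
        = exp (z • star M) * X * (exp (z • (-M)) * exp (z • M)) := by
          have : exp (z • (-M)) * exp (z • M) = 1 := by
            rw [smul_neg, ← exp_mul_exp_neg_self' (-(z • M))]; simp
          rw [this, mul_one]
      _ = F z * exp (z • M) := by rw [hF]; noncomm_ring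
      _ = X * exp (z • M) := by rw [hk]
  -- differentiate at 0
  have hd1 : HasDerivAt (fun z : ℂ => exp (z • star M) * X) (star M * X) 0 := by
    have := (hasDerivAt_exp_smul_const' (star M) (0:ℂ)).mul_const X
    simpa using this
  have hd2 : HasDerivAt (fun z : ℂ => X * exp (z • M)) (X * M) 0 := by
    have := (hasDerivAt_exp_smul_const M (0:ℂ)).const_mul X
    simpa using this
  have : (fun z : ℂ => exp (z • star M) * X) = fun z : ℂ => X * exp (z • M) :=
    funext hrel
  exact hd1.unique (this ▸ hd2)

end FP

variable {H : Type*} [NormedAddCommGroup H] [InnerProductSpace ℂ H] [CompleteSpace H]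

theorem stmt17 (A B : H →L[ℂ] H)
    (hA : IsSelfAdjoint A) (hB : IsSelfAdjoint B) :
    A * B ^ 2 * A = B * A ^ 2 * B ↔
    (A * B ^ 2 = B ^ 2 * A ∧ B * A ^ 2 = A ^ 2 * B) := by
  constructor
  · intro h
    set M : H →L[ℂ] H := A * B with hM
    have hstar : star M = B * A := by rw [hM, star_mul, hA.star_eq, hB.star_eq]
    have hnormal : M * star M = star M * M := by
      rw [hstar, hM]
      calc A * B * (B * A) = A * B ^ 2 * A := by noncomm_ring
        _ = B * A ^ 2 * B := h
        _ = B * A * (A * B) := by noncomm_ring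
    have h1 : M * A = A * star M := by rw [hstar, hM]; noncomm_ring
    have e1 := fuglede_special hnormal h1
    -- e1 : star M * A = A * M, i.e. B * A ^ 2 = A ^ 2 * B
    have h2 : star M * B = B * star (star M) := by rw [star_star, hstar, hM]; noncomm_ring
    have e2 := fuglede_special (by rw [star_star]; exact hnormal.symm) h2
    -- e2 : M * B = B * star M, i.e. A * B ^ 2 = B ^ 2 * A
    rw [star_star] at e2
    constructor
    · calc A * B ^ 2 = M * B := by rw [hM]; noncomm_ring
        _ = B * star M := e2
        _ = B ^ 2 * A := by rw [hstar]; noncomm_ring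
    · calc B * A ^ 2 = star M * A := by rw [hstar]; noncomm_ring
        _ = A * M := e1
        _ = A ^ 2 * B := by rw [hM]; noncomm_ring
  · rintro ⟨h1, h2⟩
    calc A * B ^ 2 * A = B ^ 2 * A * A := by rw [h1]
      _ = B * (B * A ^ 2) := by noncomm_ring
      _ = B * (A ^ 2 * B) := by rw [h2]
      _ = B * A ^ 2 * B := by noncomm_ring
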